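/- (Approximate OS-VI for policy evaluation, sup-norm error propagation) If V_k = S^π V_{k-1} + ε_k with ‖ε_k‖_∞ ≤ ε for all k ≥ 1, and γ' = (γ/(1-γ))‖P^π - P̂^π‖_∞ < 1, then for all k ≥ 0: ‖V^π - V_k‖_∞ ≤ γ'^k ‖V^π - V_0‖_∞ + ((1-γ'^k)/(1-γ')) ε. -/

import Mathlib

open Matrix

/-- Supremum norm on vectors. -/
noncomputable def vnorm {d : ℕ} (v : Fin d → ℝ) : ℝ := ⨆ i, |v i|

/-- Maximum absolute row sum: the operator norm induced by the supremum norm. -/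
noncomputable def mnorm {d : ℕ} (M : Matrix (Fin d) (Fin d) ℝ) : ℝ :=
  ⨆ i, ∑ j, |M i j|

/-- A row-stochastic matrix: nonnegative entries, rows summing to one. -/
def RowStochastic {d : ℕ} (P : Matrix (Fin d) (Fin d) ℝ) : Prop :=
  (∀ i j, 0 ≤ P i j) ∧ ∀ i, ∑ j, P i j = 1

/-- The Varga operator `S^π V = (I - γ P̂)⁻¹ (r + γ (P - P̂) V)`. -/
noncomputable def varga {d : ℕ} (γ : ℝ) (P Phat : Matrix (Fin d) (Fin d) ℝ)
    (r V : Fin d → ℝ) : Fin d → ℝ :=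
  ((1 - γ • Phat)⁻¹).mulVec (r + γ • ((P - Phat).mulVec V))

/-- The value function `V^π = (I - γ P)⁻¹ r`. -/
noncomputable def valueFn {d : ℕ} (γ : ℝ) (P : Matrix (Fin d) (Fin d) ℝ)
    (r : Fin d → ℝ) : Fin d → ℝ :=
  ((1 - γ • P)⁻¹).mulVec r


lemma abs_le_vnorm {d : ℕ} (v : Fin d → ℝ) (i : Fin d) : |v i| ≤ vnorm v :=
  le_ciSup (Set.Finite.bddAbove (Set.finite_range fun i => |v i|)) i

lemma vnorm_nonneg {d : ℕ} (v : Fin d → ℝ) : 0 ≤ vnorm v := by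
  rcases isEmpty_or_nonempty (Fin d) with h | h
  · simp [vnorm, Real.iSup_of_isEmpty]
  · exact le_trans (abs_nonneg _) (abs_le_vnorm v (Classical.arbitrary _))

lemma vnorm_le {d : ℕ} {v : Fin d → ℝ} {c : ℝ} (hc : 0 ≤ c)
    (h : ∀ i, |v i| ≤ c) : vnorm v ≤ c := Real.iSup_le h hc

lemma row_le_mnorm {d : ℕ} (M : Matrix (Fin d) (Fin d) ℝ) (i : Fin d) :
    ∑ j, |M i j| ≤ mnorm M :=
  le_ciSup (Set.Finite.bddAbove (Set.finite_range fun i => ∑ j, |M i j|)) i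

lemma mnorm_nonneg {d : ℕ} (M : Matrix (Fin d) (Fin d) ℝ) : 0 ≤ mnorm M := by
  rcases isEmpty_or_nonempty (Fin d) with h | h
  · simp [mnorm, Real.iSup_of_isEmpty]
  · exact le_trans (Finset.sum_nonneg fun j _ => abs_nonneg _)
      (row_le_mnorm M (Classical.arbitrary _))

lemma vnorm_add_le {d : ℕ} (a b : Fin d → ℝ) : vnorm (a + b) ≤ vnorm a + vnorm b := by
  refine vnorm_le (add_nonneg (vnorm_nonneg a) (vnorm_nonneg b)) fun i => ?_
  exact le_trans (abs_add_le _ _) (add_le_add (abs_le_vnorm a i) (abs_le_vnorm b i))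

lemma vnorm_smul_le {d : ℕ} (c : ℝ) (v : Fin d → ℝ) : vnorm (c • v) ≤ |c| * vnorm v := by
  refine vnorm_le (mul_nonneg (abs_nonneg c) (vnorm_nonneg v)) fun i => ?_
  simp only [Pi.smul_apply, smul_eq_mul, abs_mul]
  exact mul_le_mul_of_nonneg_left (abs_le_vnorm v i) (abs_nonneg c)

lemma vnorm_eq_zero {d : ℕ} {v : Fin d → ℝ} (h : vnorm v ≤ 0) : v = 0 := by
  funext i
  have := abs_le_vnorm v i
  have : |v i| ≤ 0 := this.trans h
  simpa using le_antisymm this (abs_nonneg _)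

lemma vnorm_mulVec_le {d : ℕ} (M : Matrix (Fin d) (Fin d) ℝ) (x : Fin d → ℝ) :
    vnorm (M.mulVec x) ≤ mnorm M * vnorm x := by
  refine vnorm_le (mul_nonneg (mnorm_nonneg M) (vnorm_nonneg x)) fun i => ?_
  calc |M.mulVec x i| ≤ ∑ j, |M i j| * |x j| := by
        simpa [Matrix.mulVec, dotProduct, abs_mul] using
          Finset.abs_sum_le_sum_abs (fun j => M i j * x j) Finset.univ
    _ ≤ ∑ j, |M i j| * vnorm x :=
        Finset.sum_le_sum fun j _ =>
          mul_le_mul_of_nonneg_left (abs_le_vnorm x j) (abs_nonneg _)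
    _ = (∑ j, |M i j|) * vnorm x := by rw [Finset.sum_mul]
    _ ≤ mnorm M * vnorm x :=
        mul_le_mul_of_nonneg_right (row_le_mnorm M i) (vnorm_nonneg x)

lemma vnorm_stochastic_mulVec_le {d : ℕ} {P : Matrix (Fin d) (Fin d) ℝ}
    (hP : RowStochastic P) (x : Fin d → ℝ) : vnorm (P.mulVec x) ≤ vnorm x := by
  refine vnorm_le (vnorm_nonneg x) fun i => ?_
  calc |P.mulVec x i| ≤ ∑ j, |P i j| * |x j| := by
        simpa [Matrix.mulVec, dotProduct, abs_mul] using
          Finset.abs_sum_le_sum_abs (fun j => P i j * x j) Finset.univ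
    _ ≤ ∑ j, |P i j| * vnorm x :=
        Finset.sum_le_sum fun j _ =>
          mul_le_mul_of_nonneg_left (abs_le_vnorm x j) (abs_nonneg _)
    _ = vnorm x := by
        rw [← Finset.sum_mul]
        have : ∑ j, |P i j| = 1 := by
          rw [← hP.2 i]; exact Finset.sum_congr rfl fun j _ => abs_of_nonneg (hP.1 i j)
        rw [this, one_mul]

lemma det_isUnit {d : ℕ} {γ : ℝ} (hγ0 : 0 ≤ γ) (hγ1 : γ < 1)
    {Phat : Matrix (Fin d) (Fin d) ℝ} (hPhat : RowStochastic Phat) :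
    IsUnit (1 - γ • Phat : Matrix (Fin d) (Fin d) ℝ).det := by
  rw [isUnit_iff_ne_zero]
  intro hdet
  obtain ⟨v, hv0, hv⟩ := (Matrix.exists_mulVec_eq_zero_iff).2 hdet
  have hv' : v = γ • Phat.mulVec v := by
    have h := hv
    rw [Matrix.sub_mulVec, Matrix.one_mulVec, Matrix.smul_mulVec,
      sub_eq_zero] at h
    exact h
  have h1 : vnorm v ≤ γ * vnorm v := by
    calc vnorm v = vnorm (γ • Phat.mulVec v) := by rw [← hv']
      _ ≤ |γ| * vnorm (Phat.mulVec v) := vnorm_smul_le _ _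
      _ ≤ γ * vnorm v := by
          rw [abs_of_nonneg hγ0]
          exact mul_le_mul_of_nonneg_left (vnorm_stochastic_mulVec_le hPhat v) hγ0
  have : vnorm v ≤ 0 := by nlinarith [vnorm_nonneg v]
  exact hv0 (vnorm_eq_zero this)

lemma inv_mulVec_bound {d : ℕ} {γ : ℝ} (hγ0 : 0 ≤ γ) (hγ1 : γ < 1)
    {Phat : Matrix (Fin d) (Fin d) ℝ} (hPhat : RowStochastic Phat) (w : Fin d → ℝ) :
    vnorm (((1 - γ • Phat)⁻¹).mulVec w) ≤ vnorm w / (1 - γ) := by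
  set A : Matrix (Fin d) (Fin d) ℝ := 1 - γ • Phat with hA
  set u := A⁻¹.mulVec w with hu
  have hdet := det_isUnit hγ0 hγ1 hPhat
  have hAu : A.mulVec u = w := by
    rw [hu, Matrix.mulVec_mulVec, Matrix.mul_nonsing_inv _ hdet, Matrix.one_mulVec]
  have hu' : u = w + γ • Phat.mulVec u := by
    have h : u - γ • Phat.mulVec u = w := by
      rw [← hAu, hA, Matrix.sub_mulVec, Matrix.one_mulVec, Matrix.smul_mulVec]
    rw [sub_eq_iff_eq_add] at h
    exact h
  have h1 : vnorm u ≤ vnorm w + γ * vnorm u := by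
    calc vnorm u = vnorm (w + γ • Phat.mulVec u) := by rw [← hu']
      _ ≤ vnorm w + vnorm (γ • Phat.mulVec u) := vnorm_add_le _ _
      _ ≤ vnorm w + γ * vnorm u := by
          refine add_le_add_right ?_ _
          refine (vnorm_smul_le _ _).trans ?_
          rw [abs_of_nonneg hγ0]
          exact mul_le_mul_of_nonneg_left (vnorm_stochastic_mulVec_le hPhat u) hγ0
  rw [le_div_iff₀ (by linarith)]
  nlinarith

lemma vnorm_neg {d : ℕ} (v : Fin d → ℝ) : vnorm (-v) = vnorm v := by
  simp [vnorm, abs_neg]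

lemma valueFn_fixed {d : ℕ} {γ : ℝ} (hγ0 : 0 ≤ γ) (hγ1 : γ < 1)
    {P Phat : Matrix (Fin d) (Fin d) ℝ} (hP : RowStochastic P) (hPhat : RowStochastic Phat)
    (r : Fin d → ℝ) :
    varga γ P Phat r (valueFn γ P r) = valueFn γ P r := by
  set Vp := valueFn γ P r with hVp
  have hdP := det_isUnit hγ0 hγ1 hP
  have hdPh := det_isUnit hγ0 hγ1 hPhat
  have h1 : (1 - γ • P).mulVec Vp = r := by
    rw [hVp, valueFn, Matrix.mulVec_mulVec, Matrix.mul_nonsing_inv _ hdP, Matrix.one_mulVec]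
  have h2 : r + γ • ((P - Phat).mulVec Vp) = (1 - γ • Phat).mulVec Vp := by
    rw [← h1, Matrix.sub_mulVec, Matrix.one_mulVec, Matrix.smul_mulVec,
      Matrix.sub_mulVec, Matrix.sub_mulVec, Matrix.one_mulVec, Matrix.smul_mulVec]
    module
  rw [varga, h2, Matrix.mulVec_mulVec, Matrix.nonsing_inv_mul _ hdPh, Matrix.one_mulVec]

lemma varga_sub {d : ℕ} (γ : ℝ) (P Phat : Matrix (Fin d) (Fin d) ℝ)
    (r x y : Fin d → ℝ) :
    varga γ P Phat r x - varga γ P Phat r y =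
      ((1 - γ • Phat)⁻¹).mulVec (γ • ((P - Phat).mulVec (x - y))) := by
  rw [varga, varga, ← Matrix.mulVec_sub, add_sub_add_left_eq_sub, ← smul_sub,
    ← Matrix.mulVec_sub]

lemma step_bound {d : ℕ} {γ : ℝ} (hγ0 : 0 ≤ γ) (hγ1 : γ < 1)
    {P Phat : Matrix (Fin d) (Fin d) ℝ} (hP : RowStochastic P) (hPhat : RowStochastic Phat)
    (r : Fin d → ℝ) (W εk : Fin d → ℝ) :
    vnorm (valueFn γ P r - (varga γ P Phat r W + εk)) ≤
      γ / (1 - γ) * mnorm (P - Phat) * vnorm (valueFn γ P r - W) + vnorm εk := by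
  set Vp := valueFn γ P r with hVp
  have key : Vp - (varga γ P Phat r W + εk) =
      ((1 - γ • Phat)⁻¹).mulVec (γ • ((P - Phat).mulVec (Vp - W))) + (-εk) := by
    rw [← varga_sub γ P Phat r Vp W, valueFn_fixed hγ0 hγ1 hP hPhat r, ← hVp]
    abel
  rw [key]
  refine (vnorm_add_le _ _).trans ?_
  rw [vnorm_neg]
  refine add_le_add_left ?_ _
  refine (inv_mulVec_bound hγ0 hγ1 hPhat _).trans ?_
  rw [div_mul_eq_mul_div, div_mul_eq_mul_div, div_le_div_iff₀ (by linarith) (by linarith)]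
  have h1 : vnorm (γ • ((P - Phat).mulVec (Vp - W))) ≤
      γ * (mnorm (P - Phat) * vnorm (Vp - W)) := by
    refine (vnorm_smul_le _ _).trans ?_
    rw [abs_of_nonneg hγ0]
    exact mul_le_mul_of_nonneg_left (vnorm_mulVec_le _ _) hγ0
  nlinarith [vnorm_nonneg (γ • ((P - Phat).mulVec (Vp - W)))]


/-- Approximate OS-VI for policy evaluation, sup-norm error propagation
(Theorem 1, `⋆ = ∞`). -/
theorem osvi_pe_error_propagation_sup {d : ℕ} (γ : ℝ) (hγ0 : 0 ≤ γ) (hγ1 : γ < 1)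
    (P Phat : Matrix (Fin d) (Fin d) ℝ)
    (hP : RowStochastic P) (hPhat : RowStochastic Phat)
    (r : Fin d → ℝ)
    (V : ℕ → Fin d → ℝ) (ε : ℕ → Fin d → ℝ) (e : ℝ)
    (hV : ∀ k, V (k + 1) = varga γ P Phat r (V k) + ε (k + 1))
    (hε : ∀ k, 1 ≤ k → vnorm (ε k) ≤ e)
    (hγ' : γ / (1 - γ) * mnorm (P - Phat) < 1) :
    ∀ k, vnorm (valueFn γ P r - V k) ≤
      (γ / (1 - γ) * mnorm (P - Phat)) ^ k * vnorm (valueFn γ P r - V 0) +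
        (1 - (γ / (1 - γ) * mnorm (P - Phat)) ^ k) /
          (1 - γ / (1 - γ) * mnorm (P - Phat)) * e := by
  set γ' := γ / (1 - γ) * mnorm (P - Phat) with hγ'def
  have hγ'0 : 0 ≤ γ' :=
    mul_nonneg (div_nonneg hγ0 (by linarith)) (mnorm_nonneg _)
  have he : 0 ≤ e := le_trans (vnorm_nonneg (ε 1)) (hε 1 le_rfl)
  have hpos : 0 < 1 - γ' := by linarith
  intro k
  induction k with
  | zero => simp
  | succ k ih =>
      have hstep : vnorm (valueFn γ P r - V (k + 1)) ≤
          γ' * vnorm (valueFn γ P r - V k) + e := by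
        rw [hV k]
        refine (step_bound hγ0 hγ1 hP hPhat r (V k) (ε (k + 1))).trans ?_
        exact add_le_add_right (hε (k + 1) (by omega)) _
      refine hstep.trans ?_
      have h2 : γ' * vnorm (valueFn γ P r - V k) + e ≤
          γ' * (γ' ^ k * vnorm (valueFn γ P r - V 0) +
            (1 - γ' ^ k) / (1 - γ') * e) + e := by
        exact add_le_add_left (mul_le_mul_of_nonneg_left ih hγ'0) e
      refine h2.trans (le_of_eq ?_)
      field_simp
      ring
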